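/- arXiv:2604.05298 — 2 statements merged into one kernel-verified Lean document; each statement's English description precedes it below -/
import Mathlib

section
/- Let Δ(τ) = E[(1 − γ·1{Θ_τ < 1})·(F(Θ_τ) − Θ_τ)] where Θ_τ = ατ + σ√α Z, Z ~ N(0,1), α = 1/(1+σ²), γ ∈ (0,1), and F(θ) = 1 for θ ≤ 1, F(θ) = Φ((τ−θ)/σ) for θ > 1. If σ² < 2π then Δ is strictly decreasing on ℝ. -/
open MeasureTheory ProbabilityTheory Filter

noncomputable def stdPDF (x : ℝ) : ℝ := (Real.sqrt (2 * Real.pi))⁻¹ * Real.exp (-x ^ 2 / 2)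

noncomputable def stdCDF (x : ℝ) : ℝ := ∫ t in Set.Iic x, stdPDF t

lemma stdPDF_nonneg (x : ℝ) : 0 ≤ stdPDF x := by unfold stdPDF; positivity

lemma stdPDF_le (x : ℝ) : stdPDF x ≤ (Real.sqrt (2 * Real.pi))⁻¹ := by
  have h1 : Real.exp (-x ^ 2 / 2) ≤ 1 := by
    rw [Real.exp_le_one_iff]; nlinarith [sq_nonneg x]
  have h2 : (0:ℝ) ≤ (Real.sqrt (2 * Real.pi))⁻¹ := by positivity
  calc stdPDF x ≤ (Real.sqrt (2 * Real.pi))⁻¹ * 1 := mul_le_mul_of_nonneg_left h1 h2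
    _ = _ := mul_one _

lemma integrable_stdPDF : Integrable stdPDF := by
  have h : Integrable (fun x : ℝ => (Real.sqrt (2 * Real.pi))⁻¹ * Real.exp (-(1/2 : ℝ) * x ^ 2)) :=
    (integrable_exp_neg_mul_sq (by norm_num)).const_mul _
  refine h.congr (Filter.Eventually.of_forall fun x => ?_)
  simp only [stdPDF]
  rw [show -(1/2 : ℝ) * x ^ 2 = -x ^ 2 / 2 by ring]

lemma stdCDF_nonneg (x : ℝ) : 0 ≤ stdCDF x :=
  setIntegral_nonneg measurableSet_Iic fun t _ => stdPDF_nonneg t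

lemma integral_stdPDF : ∫ x, stdPDF x = 1 := by
  have : ∫ x : ℝ, Real.exp (-(1/2 : ℝ) * x ^ 2) = Real.sqrt (2 * Real.pi) := by
    rw [integral_gaussian]; rw [show (2:ℝ) * Real.pi = Real.pi / (1/2) by ring]
  calc ∫ x, stdPDF x = (Real.sqrt (2 * Real.pi))⁻¹ * ∫ x : ℝ, Real.exp (-(1/2 : ℝ) * x ^ 2) := by
        rw [← integral_const_mul]
        exact integral_congr_ae (Filter.Eventually.of_forall fun x => by
          simp only [stdPDF]; rw [show -(1/2 : ℝ) * x ^ 2 = -x ^ 2 / 2 by ring])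
    _ = 1 := by
        rw [this]; exact inv_mul_cancel₀ (by positivity)

lemma stdCDF_le_one (x : ℝ) : stdCDF x ≤ 1 := by
  rw [← integral_stdPDF]
  exact setIntegral_le_integral integrable_stdPDF (Filter.Eventually.of_forall stdPDF_nonneg)

lemma stdCDF_mono : Monotone stdCDF := fun a b hab =>
  setIntegral_mono_set integrable_stdPDF.integrableOn
    (Filter.Eventually.of_forall stdPDF_nonneg) (Set.Iic_subset_Iic.2 hab).eventuallyLE

lemma stdCDF_sub_le {a b : ℝ} (hab : a ≤ b) :
    stdCDF b - stdCDF a ≤ (b - a) * (Real.sqrt (2 * Real.pi))⁻¹ := by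
  have hsplit : stdCDF a + ∫ t in Set.Ioc a b, stdPDF t = stdCDF b := by
    rw [stdCDF, stdCDF, ← setIntegral_union (Set.Iic_disjoint_Ioc le_rfl) measurableSet_Ioc
      integrable_stdPDF.integrableOn integrable_stdPDF.integrableOn,
      Set.Iic_union_Ioc_eq_Iic hab]
  have hle : ∫ t in Set.Ioc a b, stdPDF t ≤ ∫ _ in Set.Ioc a b, (Real.sqrt (2 * Real.pi))⁻¹ :=
    setIntegral_mono_on integrable_stdPDF.integrableOn (integrableOn_const (by
      rw [Real.volume_Ioc]; exact ENNReal.ofReal_ne_top)) measurableSet_Ioc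
      fun t _ => stdPDF_le t
  have hconst : ∫ _ in Set.Ioc a b, (Real.sqrt (2 * Real.pi))⁻¹ =
      (b - a) * (Real.sqrt (2 * Real.pi))⁻¹ := by
    rw [setIntegral_const, Real.volume_real_Ioc, max_eq_left (by linarith), smul_eq_mul]
  linarith

/-- Posterior representation Θ_τ = ατ + σ√α z with α = 1/(1+σ²). -/
noncomputable def thetaPost (σ τ z : ℝ) : ℝ :=
  (1 / (1 + σ ^ 2)) * τ + σ * Real.sqrt (1 / (1 + σ ^ 2)) * z

/-- Ex-post aggregate action: F(θ) = 1 for θ ≤ 1 and Φ((τ−θ)/σ) for θ > 1. -/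
noncomputable def Fagg (σ τ θ : ℝ) : ℝ := if θ ≤ 1 then 1 else stdCDF ((τ - θ) / σ)

lemma g_anti (σ γ : ℝ) (hσ : 0 < σ) (hσ' : σ ^ 2 < 2 * Real.pi)
    (hγ : γ ∈ Set.Ioo (0 : ℝ) 1) (z : ℝ) {τ₁ τ₂ : ℝ} (h : τ₁ < τ₂) :
    (1 - γ * (if thetaPost σ τ₂ z < 1 then (1 : ℝ) else 0)) *
        (Fagg σ τ₂ (thetaPost σ τ₂ z) - thetaPost σ τ₂ z)
      < (1 - γ * (if thetaPost σ τ₁ z < 1 then (1 : ℝ) else 0)) *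
        (Fagg σ τ₁ (thetaPost σ τ₁ z) - thetaPost σ τ₁ z) := by
  obtain ⟨hγ0, hγ1⟩ := hγ
  have hσ2 : (0:ℝ) < 1 + σ ^ 2 := by positivity
  set a : ℝ := 1 / (1 + σ ^ 2) with ha_def
  have ha : 0 < a := by positivity
  set θ₁ := thetaPost σ τ₁ z with hθ1_def
  set θ₂ := thetaPost σ τ₂ z with hθ2_def
  have hd : 0 < τ₂ - τ₁ := sub_pos.2 h
  have hθ : θ₂ - θ₁ = a * (τ₂ - τ₁) := by
    simp only [hθ1_def, hθ2_def, thetaPost, ← ha_def]; ring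
  have hθlt : θ₁ < θ₂ := by nlinarith [mul_pos ha hd]
  rcases le_or_gt θ₂ 1 with h2 | h2
  · -- both ≤ 1
    have h1 : θ₁ < 1 := lt_of_lt_of_le hθlt h2
    rw [Fagg, if_pos h2, Fagg, if_pos h1.le, if_pos h1]
    rcases h2.lt_or_eq with h2' | h2'
    · rw [if_pos h2']
      nlinarith
    · rw [if_neg (by rw [h2']; exact lt_irrefl 1)]
      rw [h2']
      nlinarith
  · -- θ₂ > 1
    have hg2 : (1 - γ * (if θ₂ < 1 then (1:ℝ) else 0)) * (Fagg σ τ₂ θ₂ - θ₂)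
        = stdCDF ((τ₂ - θ₂) / σ) - θ₂ := by
      rw [if_neg (not_lt.2 h2.le), Fagg, if_neg (not_le.2 h2)]; ring
    rcases le_or_gt θ₁ 1 with h1 | h1
    · -- jump case: RHS ≥ 0 > LHS
      have hneg : stdCDF ((τ₂ - θ₂) / σ) - θ₂ < 0 := by
        have := stdCDF_le_one ((τ₂ - θ₂) / σ); linarith
      have hfac : 0 ≤ 1 - γ * (if θ₁ < 1 then (1:ℝ) else 0) := by
        split <;> simp <;> linarith
      have hRHS : 0 ≤ (1 - γ * (if θ₁ < 1 then (1:ℝ) else 0)) * (Fagg σ τ₁ θ₁ - θ₁) := by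
        rw [Fagg, if_pos h1]
        exact mul_nonneg hfac (by linarith)
      rw [hg2]; linarith
    · -- both > 1
      have hg1 : (1 - γ * (if θ₁ < 1 then (1:ℝ) else 0)) * (Fagg σ τ₁ θ₁ - θ₁)
          = stdCDF ((τ₁ - θ₁) / σ) - θ₁ := by
        rw [if_neg (not_lt.2 h1.le), Fagg, if_neg (not_le.2 h1)]; ring
      rw [hg1, hg2]
      set u₁ := (τ₁ - θ₁) / σ
      set u₂ := (τ₂ - θ₂) / σ
      have haa : 1 - a = σ ^ 2 * a := by
        rw [ha_def]; field_simp; ring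
      have hu : u₂ - u₁ = σ * a * (τ₂ - τ₁) := by
        have : u₂ - u₁ = ((τ₂ - τ₁) - (θ₂ - θ₁)) / σ := by
          simp only [u₁, u₂]; field_simp; ring
        rw [this, hθ]
        field_simp
        nlinarith [haa]
      set s := Real.sqrt (2 * Real.pi) with hs_def
      have hs : 0 < s := Real.sqrt_pos.2 (by positivity)
      have hσs : σ < s := by
        rw [hs_def]
        exact (Real.lt_sqrt hσ.le).2 hσ'
      have hle : stdCDF u₂ - stdCDF u₁ ≤ (u₂ - u₁) * s⁻¹ :=
        stdCDF_sub_le (by nlinarith [mul_pos (mul_pos hσ ha) hd])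
      have hkey : (u₂ - u₁) * s⁻¹ < a * (τ₂ - τ₁) := by
        rw [hu]
        have h1' : σ * a * (τ₂ - τ₁) * s⁻¹ < s * a * (τ₂ - τ₁) * s⁻¹ := by
          have := mul_pos (mul_pos ha hd) (inv_pos.2 hs)
          nlinarith
        have h2' : s * a * (τ₂ - τ₁) * s⁻¹ = a * (τ₂ - τ₁) := by
          field_simp
        linarith
      linarith

lemma integrable_abs_gauss : Integrable (fun z : ℝ => |z|) (gaussianReal 0 1) := by
  rw [gaussianReal_of_var_ne_zero 0 one_ne_zero,
    integrable_withDensity_iff (measurable_gaussianPDF 0 1)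
      (Filter.Eventually.of_forall fun x => ENNReal.ofReal_lt_top)]
  have key : Integrable (fun x : ℝ => |x * Real.exp (-(1/2 : ℝ) * x ^ 2)| * (Real.sqrt (2 * Real.pi))⁻¹) :=
    ((integrable_mul_exp_neg_mul_sq (by norm_num : (0:ℝ) < 1/2)).abs).mul_const _
  refine key.congr (Filter.Eventually.of_forall fun x => ?_)
  show _ = |x| * (ENNReal.ofReal (gaussianPDFReal 0 1 x)).toReal
  rw [ENNReal.toReal_ofReal (gaussianPDFReal_nonneg _ _ _)]
  simp only [gaussianPDFReal, abs_mul, abs_of_pos (Real.exp_pos _), NNReal.coe_one]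
  rw [show -(1/2 : ℝ) * x ^ 2 = -(x - 0) ^ 2 / (2 * 1) by ring]
  ring

lemma integrable_gauss_linear {f : ℝ → ℝ} (hm : Measurable f) {C D : ℝ}
    (hb : ∀ z, |f z| ≤ C + D * |z|) : Integrable f (gaussianReal 0 1) := by
  have hbound : Integrable (fun z : ℝ => C + D * |z|) (gaussianReal 0 1) :=
    (integrable_const C).add (integrable_abs_gauss.const_mul D)
  refine hbound.mono hm.aestronglyMeasurable (Filter.Eventually.of_forall fun z => ?_)
  rw [Real.norm_eq_abs, Real.norm_eq_abs,
    abs_of_nonneg (le_trans (abs_nonneg (f z)) (hb z))]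
  exact hb z

lemma meas_integrand (σ γ τ : ℝ) :
    Measurable (fun z => (1 - γ * (if thetaPost σ τ z < 1 then (1 : ℝ) else 0)) *
      (Fagg σ τ (thetaPost σ τ z) - thetaPost σ τ z)) := by
  have hθ : Measurable (thetaPost σ τ) := by
    unfold thetaPost; fun_prop
  have hF : Measurable (fun θ => Fagg σ τ θ) := by
    unfold Fagg
    exact Measurable.ite measurableSet_Iic measurable_const
      (stdCDF_mono.measurable.comp (by fun_prop))
  have hind : Measurable (fun z => if thetaPost σ τ z < 1 then (1 : ℝ) else 0) := by
    exact Measurable.ite (measurableSet_lt hθ measurable_const) measurable_const measurable_const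
  exact (measurable_const.sub (hind.const_mul γ)).mul ((hF.comp hθ).sub hθ)

lemma integrable_integrand (σ γ τ : ℝ) (hσ : 0 < σ) (hγ : γ ∈ Set.Ioo (0 : ℝ) 1) :
    Integrable (fun z => (1 - γ * (if thetaPost σ τ z < 1 then (1 : ℝ) else 0)) *
      (Fagg σ τ (thetaPost σ τ z) - thetaPost σ τ z)) (gaussianReal 0 1) := by
  obtain ⟨hγ0, hγ1⟩ := hγ
  refine integrable_gauss_linear (meas_integrand σ γ τ)
    (C := 1 + |(1 / (1 + σ ^ 2)) * τ|) (D := σ * Real.sqrt (1 / (1 + σ ^ 2))) fun z => ?_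
  have hc : 0 ≤ σ * Real.sqrt (1 / (1 + σ ^ 2)) := by positivity
  have h1 : |1 - γ * (if thetaPost σ τ z < 1 then (1 : ℝ) else 0)| ≤ 1 := by
    split <;> rw [abs_of_nonneg (by linarith)] <;> linarith
  have hF1 : |Fagg σ τ (thetaPost σ τ z)| ≤ 1 := by
    rw [Fagg]
    split
    · simp
    · rw [abs_of_nonneg (stdCDF_nonneg _)]; exact stdCDF_le_one _
  have hθb : |thetaPost σ τ z| ≤ |(1 / (1 + σ ^ 2)) * τ| + σ * Real.sqrt (1 / (1 + σ ^ 2)) * |z| := by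
    rw [thetaPost]
    refine le_trans (abs_add_le _ _) ?_
    rw [abs_mul, abs_mul, abs_of_nonneg hc]
  have h2 : |Fagg σ τ (thetaPost σ τ z) - thetaPost σ τ z| ≤
      1 + (|(1 / (1 + σ ^ 2)) * τ| + σ * Real.sqrt (1 / (1 + σ ^ 2)) * |z|) := by
    refine le_trans (abs_sub _ _) (by linarith)
  rw [abs_mul]
  calc |1 - γ * (if thetaPost σ τ z < 1 then (1 : ℝ) else 0)| *
        |Fagg σ τ (thetaPost σ τ z) - thetaPost σ τ z|
      ≤ 1 * (1 + (|(1 / (1 + σ ^ 2)) * τ| + σ * Real.sqrt (1 / (1 + σ ^ 2)) * |z|)) := by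
        exact mul_le_mul h1 h2 (abs_nonneg _) zero_le_one
    _ = 1 + |(1 / (1 + σ ^ 2)) * τ| + σ * Real.sqrt (1 / (1 + σ ^ 2)) * |z| := by ring

/-- Two-stage indifference function Δ(τ) = E[(1 − γ1{Θ_τ<1})(F(Θ_τ) − Θ_τ)], Z ~ N(0,1). -/
noncomputable def Δ (σ γ τ : ℝ) : ℝ :=
  ∫ z, (1 - γ * (if thetaPost σ τ z < 1 then (1 : ℝ) else 0)) *
      (Fagg σ τ (thetaPost σ τ z) - thetaPost σ τ z) ∂(gaussianReal 0 1)

/-- If σ² < 2π then Δ is strictly decreasing on ℝ. -/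
theorem stmt5 (σ γ : ℝ) (hσ : 0 < σ) (hσ' : σ ^ 2 < 2 * Real.pi)
    (hγ : γ ∈ Set.Ioo (0 : ℝ) 1) :
    StrictAnti (Δ σ γ) := by
  intro τ₁ τ₂ h
  set g : ℝ → ℝ → ℝ := fun τ z => (1 - γ * (if thetaPost σ τ z < 1 then (1 : ℝ) else 0)) *
      (Fagg σ τ (thetaPost σ τ z) - thetaPost σ τ z) with hg_def
  have hi1 : Integrable (g τ₁) (gaussianReal 0 1) := integrable_integrand σ γ τ₁ hσ hγ
  have hi2 : Integrable (g τ₂) (gaussianReal 0 1) := integrable_integrand σ γ τ₂ hσ hγ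
  have hpos : ∀ z, 0 < g τ₁ z - g τ₂ z := fun z => sub_pos.2 (g_anti σ γ hσ hσ' hγ z h)
  have hint : 0 < ∫ z, (g τ₁ z - g τ₂ z) ∂(gaussianReal 0 1) := by
    rw [integral_pos_iff_support_of_nonneg (fun z => (hpos z).le) (hi1.sub hi2)]
    have : Function.support (fun z => g τ₁ z - g τ₂ z) = Set.univ :=
      Set.eq_univ_of_forall fun z => (hpos z).ne'
    rw [this]
    simp
  rw [integral_sub hi1 hi2] at hint
  have : Δ σ γ τ₁ = ∫ z, g τ₁ z ∂(gaussianReal 0 1) := rfl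
  have : Δ σ γ τ₂ = ∫ z, g τ₂ z ∂(gaussianReal 0 1) := rfl
  simp only [Δ, ← hg_def]
  linarith
end

section
/- The τ-derivative of the two-stage welfare satisfies dW₂/dτ(τ,σ,γ) = f_Y(τ)·[Δ₂(τ,σ,γ) + ∫_1^∞ Φ((τ−θ)/σ) f(θ|Y=τ) dθ], where f_Y is the marginal density of Y = Θ + Z; hence W₂ is strictly increasing in τ on any interval where Δ₂(τ,σ,γ) > 0. -/
open MeasureTheory ProbabilityTheory Filter

/-- Posterior density of Θ given Y = τ: Gaussian with mean ατ, variance ασ², α = 1/(1+σ²). -/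
noncomputable def postPDF (σ τ θ : ℝ) : ℝ :=
  (Real.sqrt ((1 / (1 + σ ^ 2)) * σ ^ 2))⁻¹ *
    stdPDF ((θ - (1 / (1 + σ ^ 2)) * τ) / Real.sqrt ((1 / (1 + σ ^ 2)) * σ ^ 2))

/-- Two-stage indifference function. -/
noncomputable def Δ₂ (σ γ τ : ℝ) : ℝ :=
  (∫ θ in Set.Iic (1 : ℝ), (1 - γ) * (1 - θ) * postPDF σ τ θ) +
    ∫ θ in Set.Ioi (1 : ℝ), (stdCDF ((τ - θ) / σ) - θ) * postPDF σ τ θ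

/-- Single-stage indifference function. -/
noncomputable def Δ₁ (σ τ : ℝ) : ℝ :=
  ∫ θ, (stdCDF ((τ - θ) / σ) - θ) * postPDF σ τ θ

/-- First-stage participation fraction. -/
noncomputable def F1 (σ τ θ : ℝ) : ℝ := stdCDF ((τ - θ) / σ)

/-- Two-stage welfare. -/
noncomputable def W₂ (σ γ τ : ℝ) : ℝ :=
  (∫ θ in Set.Iic (1 : ℝ), (F1 σ τ θ + γ * (1 - F1 σ τ θ)) * (1 - θ) * stdPDF θ) +
    ∫ θ in Set.Ioi (1 : ℝ), F1 σ τ θ * (F1 σ τ θ - θ) * stdPDF θ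

/-- Single-stage welfare. -/
noncomputable def W₁ (σ τ : ℝ) : ℝ :=
  ∫ θ, F1 σ τ θ * (F1 σ τ θ - θ) * stdPDF θ

/-- Marginal density of Y = Θ + Z. -/
noncomputable def fY (σ τ : ℝ) : ℝ :=
  (Real.sqrt (1 + σ ^ 2))⁻¹ * stdPDF (τ / Real.sqrt (1 + σ ^ 2))

/- ### Auxiliary lemmas -/

lemma sqrt2pi_pos : 0 < Real.sqrt (2 * Real.pi) := Real.sqrt_pos.2 (by positivity)

lemma stdPDF_pos (x : ℝ) : 0 < stdPDF x := by
  unfold stdPDF; positivity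

lemma abs_stdPDF_le (x : ℝ) : |stdPDF x| ≤ (Real.sqrt (2 * Real.pi))⁻¹ := by
  rw [abs_of_pos (stdPDF_pos x)]; exact stdPDF_le x

lemma continuous_stdPDF : Continuous stdPDF := by
  unfold stdPDF; fun_prop

lemma stdPDF_eq (x : ℝ) : stdPDF x = (Real.sqrt (2 * Real.pi))⁻¹ * Real.exp (-(1/2) * x ^ 2) := by
  unfold stdPDF; ring_nf

lemma integrable_abs_mul_stdPDF : Integrable (fun x => |x| * stdPDF x) := by
  have h := ((integrable_mul_exp_neg_mul_sq (b := 1/2) (by norm_num)).abs).const_mul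
    (Real.sqrt (2 * Real.pi))⁻¹
  refine h.mono' ((continuous_abs.mul continuous_stdPDF).aestronglyMeasurable)
    (.of_forall fun x => ?_)
  rw [Real.norm_eq_abs, stdPDF_eq, abs_mul, abs_abs]
  rw [abs_of_nonneg
    (by positivity : (0:ℝ) ≤ (Real.sqrt (2 * Real.pi))⁻¹ * Real.exp (-(1/2) * x ^ 2)), abs_mul]
  rw [abs_of_nonneg (Real.exp_nonneg _)]
  ring_nf
  exact le_refl _

lemma hasDerivAt_stdCDF (x : ℝ) : HasDerivAt stdCDF (stdPDF x) x := by
  have key : ∀ y : ℝ, stdCDF y = stdCDF 0 + ∫ t in (0:ℝ)..y, stdPDF t := by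
    intro y
    rw [← intervalIntegral.integral_Iic_sub_Iic integrable_stdPDF.integrableOn
      integrable_stdPDF.integrableOn]
    unfold stdCDF; ring
  have : HasDerivAt (fun y => stdCDF 0 + ∫ t in (0:ℝ)..y, stdPDF t) (stdPDF x) x := by
    refine HasDerivAt.const_add _ ?_
    exact intervalIntegral.integral_hasDerivAt_right
      (integrable_stdPDF.intervalIntegrable)
      continuous_stdPDF.aestronglyMeasurable.stronglyMeasurableAtFilter
      continuous_stdPDF.continuousAt
  exact this.congr_of_eventuallyEq (.of_forall key)

lemma continuous_stdCDF : Continuous stdCDF :=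
  continuous_iff_continuousAt.2 fun x => (hasDerivAt_stdCDF x).continuousAt

lemma density_identity {σ : ℝ} (hσ : 0 < σ) (τ θ : ℝ) :
    σ⁻¹ * stdPDF ((τ - θ) / σ) * stdPDF θ = fY σ τ * postPDF σ τ θ := by
  have hc : (0:ℝ) < 1 + σ ^ 2 := by positivity
  unfold fY postPDF stdPDF
  set s := Real.sqrt ((1 / (1 + σ ^ 2)) * σ ^ 2) with hs_def
  set r := Real.sqrt (1 + σ ^ 2) with hr_def
  have hs2 : s ^ 2 = (1 / (1 + σ ^ 2)) * σ ^ 2 := Real.sq_sqrt (by positivity)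
  have hr2 : r ^ 2 = 1 + σ ^ 2 := Real.sq_sqrt hc.le
  have hs : 0 < s := Real.sqrt_pos.2 (by positivity)
  have hr : 0 < r := Real.sqrt_pos.2 hc
  have hrs : r * s = σ := by
    rw [hr_def, hs_def, ← Real.sqrt_mul hc.le]
    rw [show (1 + σ ^ 2) * (1 / (1 + σ ^ 2) * σ ^ 2) = σ ^ 2 by field_simp,
      Real.sqrt_sq hσ.le]
  have e : Real.exp (-((τ - θ) / σ) ^ 2 / 2) * Real.exp (-θ ^ 2 / 2)
      = Real.exp (-(τ / r) ^ 2 / 2) *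
        Real.exp (-((θ - 1 / (1 + σ ^ 2) * τ) / s) ^ 2 / 2) := by
    rw [← Real.exp_add, ← Real.exp_add]
    congr 1
    rw [div_pow, div_pow, div_pow, hs2, hr2]
    field_simp
    ring
  have hσinv : σ⁻¹ = r⁻¹ * s⁻¹ := by rw [← mul_inv, hrs]
  rw [hσinv]
  linear_combination
    (r⁻¹ * s⁻¹ * (Real.sqrt (2 * Real.pi))⁻¹ * (Real.sqrt (2 * Real.pi))⁻¹) * e

lemma postPDF_nonneg (σ τ θ : ℝ) : 0 ≤ postPDF σ τ θ := by
  unfold postPDF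
  exact mul_nonneg (by positivity) (stdPDF_pos _).le

lemma fY_pos {σ : ℝ} (hσ : 0 < σ) (τ : ℝ) : 0 < fY σ τ := by
  unfold fY
  have : (0:ℝ) < Real.sqrt (1 + σ ^ 2) := Real.sqrt_pos.2 (by positivity)
  exact mul_pos (by positivity) (stdPDF_pos _)

lemma integrable_two_add_abs : Integrable (fun θ : ℝ => (2 + |θ|) * stdPDF θ) := by
  have h : (fun θ : ℝ => (2 + |θ|) * stdPDF θ)
      = fun θ => 2 * stdPDF θ + |θ| * stdPDF θ := by funext θ; ring
  rw [h]
  exact (integrable_stdPDF.const_mul 2).add integrable_abs_mul_stdPDF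

lemma integrable_bound (k : ℝ) : Integrable (fun θ : ℝ => k * ((2 + |θ|) * stdPDF θ)) :=
  integrable_two_add_abs.const_mul k

lemma cont_c (σ x : ℝ) : Continuous fun θ : ℝ => stdCDF ((x - θ) / σ) :=
  continuous_stdCDF.comp ((continuous_const.sub continuous_id).div_const σ)

lemma cont_p (σ x : ℝ) : Continuous fun θ : ℝ => stdPDF ((x - θ) / σ) :=
  continuous_stdPDF.comp ((continuous_const.sub continuous_id).div_const σ)

lemma abs_one_sub_le (θ : ℝ) : |1 - θ| ≤ 2 + |θ| := by
  rw [abs_le]; constructor <;> nlinarith [le_abs_self θ, neg_abs_le θ]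

lemma hasDerivAt_c {σ : ℝ} (hσ : 0 < σ) (θ x : ℝ) :
    HasDerivAt (fun x : ℝ => stdCDF ((x - θ) / σ)) (stdPDF ((x - θ) / σ) * (1 / σ)) x := by
  have h1 : HasDerivAt (fun x : ℝ => (x - θ) / σ) (1 / σ) x := by
    simpa using ((hasDerivAt_id x).sub_const θ).div_const σ
  exact (hasDerivAt_stdCDF ((x - θ) / σ)).comp x h1

/- ### Derivatives of the two pieces of W₂ -/

lemma deriv_part1 {σ : ℝ} (γ : ℝ) (hσ : 0 < σ) (hγ : γ ∈ Set.Ioo (0 : ℝ) 1) (τ : ℝ) :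
    HasDerivAt
      (fun x => ∫ θ in Set.Iic (1 : ℝ),
        (stdCDF ((x - θ) / σ) + γ * (1 - stdCDF ((x - θ) / σ))) * (1 - θ) * stdPDF θ)
      (∫ θ in Set.Iic (1 : ℝ),
        (stdPDF ((τ - θ) / σ) * (1 / σ) + γ * (0 - stdPDF ((τ - θ) / σ) * (1 / σ))) * (1 - θ) *
          stdPDF θ) τ := by
  obtain ⟨hγ0, hγ1⟩ := hγ
  have hcont : ∀ x : ℝ, Continuous fun θ : ℝ =>
      (stdCDF ((x - θ) / σ) + γ * (1 - stdCDF ((x - θ) / σ))) * (1 - θ) * stdPDF θ := fun x =>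
    (((cont_c σ x).add (continuous_const.mul (continuous_const.sub (cont_c σ x)))).mul
      (continuous_const.sub continuous_id)).mul continuous_stdPDF
  have hcont' : ∀ x : ℝ, Continuous fun θ : ℝ =>
      (stdPDF ((x - θ) / σ) * (1 / σ) + γ * (0 - stdPDF ((x - θ) / σ) * (1 / σ))) * (1 - θ) *
        stdPDF θ := fun x =>
    ((((cont_p σ x).mul continuous_const).add
      (continuous_const.mul (continuous_const.sub ((cont_p σ x).mul continuous_const)))).mul
      (continuous_const.sub continuous_id)).mul continuous_stdPDF
  refine (hasDerivAt_integral_of_dominated_loc_of_deriv_le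
    (F' := fun x θ =>
      (stdPDF ((x - θ) / σ) * (1 / σ) + γ * (0 - stdPDF ((x - θ) / σ) * (1 / σ))) * (1 - θ) *
        stdPDF θ)
    (s := Metric.ball τ 1) (Metric.ball_mem_nhds τ one_pos)
    (.of_forall fun x => (hcont x).aestronglyMeasurable)
    ?_ ((hcont' τ).aestronglyMeasurable) (.of_forall fun θ => ?_)
    ((integrable_bound ((1 / σ) * (Real.sqrt (2 * Real.pi))⁻¹)).restrict)
    (.of_forall fun θ x _ => ?_)).2
  · -- integrability of F τ
    refine ((integrable_bound 1).restrict).mono'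
      ((hcont τ).aestronglyMeasurable.restrict) (.of_forall fun θ => ?_)
    have hc0 := stdCDF_nonneg ((τ - θ) / σ)
    have hc1 := stdCDF_le_one ((τ - θ) / σ)
    have hA : |stdCDF ((τ - θ) / σ) + γ * (1 - stdCDF ((τ - θ) / σ))| ≤ 1 := by
      rw [abs_le]; constructor <;> nlinarith
    rw [Real.norm_eq_abs, abs_mul, abs_mul, abs_of_pos (stdPDF_pos θ), one_mul]
    calc |stdCDF ((τ - θ) / σ) + γ * (1 - stdCDF ((τ - θ) / σ))| * |1 - θ| * stdPDF θ
        ≤ 1 * (2 + |θ|) * stdPDF θ := by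
          gcongr <;> first
            | exact (stdPDF_pos θ).le
            | exact hA
            | exact abs_one_sub_le θ
            | exact mul_nonneg (abs_nonneg _) (stdPDF_pos θ).le
            | exact mul_nonneg (mul_nonneg (abs_nonneg _) (by positivity)) (stdPDF_pos θ).le
            | positivity
      _ = (2 + |θ|) * stdPDF θ := by ring
  · -- uniform bound for F'
    intro x _
    have key : (stdPDF ((x - θ) / σ) * (1 / σ) + γ * (0 - stdPDF ((x - θ) / σ) * (1 / σ)))
        * (1 - θ) * stdPDF θ
        = ((1 - γ) * (stdPDF ((x - θ) / σ) * (1 / σ))) * ((1 - θ) * stdPDF θ) := by ring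
    rw [Real.norm_eq_abs]
    beta_reduce
    rw [key, abs_mul, abs_mul, abs_mul, abs_mul, abs_of_pos (stdPDF_pos θ)]
    have h1 : |1 - γ| ≤ 1 := by rw [abs_le]; constructor <;> nlinarith
    have h2 : |stdPDF ((x - θ) / σ)| ≤ (Real.sqrt (2 * Real.pi))⁻¹ := abs_stdPDF_le _
    have h3 : |1 - θ| ≤ 2 + |θ| := abs_one_sub_le θ
    have h4 : |1 / σ| = 1 / σ := abs_of_pos (by positivity)
    rw [h4]
    calc |1 - γ| * (|stdPDF ((x - θ) / σ)| * (1 / σ)) * (|1 - θ| * stdPDF θ)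
        ≤ 1 * ((Real.sqrt (2 * Real.pi))⁻¹ * (1 / σ)) * ((2 + |θ|) * stdPDF θ) := by
          gcongr <;> first
            | exact (stdPDF_pos θ).le
            | exact h1
            | exact h2
            | exact h3
            | exact mul_nonneg (abs_nonneg _) (stdPDF_pos θ).le
            | exact mul_nonneg (mul_nonneg (abs_nonneg _) (by positivity)) (stdPDF_pos θ).le
            | positivity
      _ = 1 / σ * (Real.sqrt (2 * Real.pi))⁻¹ * ((2 + |θ|) * stdPDF θ) := by ring
  · -- differentiability
    have hc := hasDerivAt_c hσ θ x
    exact ((hc.add (((hasDerivAt_const x (1:ℝ)).sub hc).const_mul γ)).mul_const (1 - θ)).mul_const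
      (stdPDF θ)

lemma deriv_part2 {σ : ℝ} (hσ : 0 < σ) (τ : ℝ) :
    HasDerivAt
      (fun x => ∫ θ in Set.Ioi (1 : ℝ),
        stdCDF ((x - θ) / σ) * (stdCDF ((x - θ) / σ) - θ) * stdPDF θ)
      (∫ θ in Set.Ioi (1 : ℝ),
        (stdPDF ((τ - θ) / σ) * (1 / σ) * (stdCDF ((τ - θ) / σ) - θ) +
          stdCDF ((τ - θ) / σ) * (stdPDF ((τ - θ) / σ) * (1 / σ))) * stdPDF θ) τ := by
  have hcont : ∀ x : ℝ, Continuous fun θ : ℝ =>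
      stdCDF ((x - θ) / σ) * (stdCDF ((x - θ) / σ) - θ) * stdPDF θ := fun x =>
    ((cont_c σ x).mul ((cont_c σ x).sub continuous_id)).mul continuous_stdPDF
  have hcont' : ∀ x : ℝ, Continuous fun θ : ℝ =>
      (stdPDF ((x - θ) / σ) * (1 / σ) * (stdCDF ((x - θ) / σ) - θ) +
        stdCDF ((x - θ) / σ) * (stdPDF ((x - θ) / σ) * (1 / σ))) * stdPDF θ := fun x =>
    ((((cont_p σ x).mul continuous_const).mul ((cont_c σ x).sub continuous_id)).add
      ((cont_c σ x).mul ((cont_p σ x).mul continuous_const))).mul continuous_stdPDF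
  refine (hasDerivAt_integral_of_dominated_loc_of_deriv_le
    (F' := fun x θ =>
      (stdPDF ((x - θ) / σ) * (1 / σ) * (stdCDF ((x - θ) / σ) - θ) +
        stdCDF ((x - θ) / σ) * (stdPDF ((x - θ) / σ) * (1 / σ))) * stdPDF θ)
    (s := Metric.ball τ 1) (Metric.ball_mem_nhds τ one_pos)
    (.of_forall fun x => (hcont x).aestronglyMeasurable)
    ?_ ((hcont' τ).aestronglyMeasurable) (.of_forall fun θ => ?_)
    ((integrable_bound ((1 / σ) * (Real.sqrt (2 * Real.pi))⁻¹)).restrict)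
    (.of_forall fun θ x _ => ?_)).2
  · refine ((integrable_bound 1).restrict).mono'
      ((hcont τ).aestronglyMeasurable.restrict) (.of_forall fun θ => ?_)
    have hc0 := stdCDF_nonneg ((τ - θ) / σ)
    have hc1 := stdCDF_le_one ((τ - θ) / σ)
    have hB : |stdCDF ((τ - θ) / σ) - θ| ≤ 2 + |θ| := by
      rw [abs_le]; constructor <;> nlinarith [le_abs_self θ, neg_abs_le θ]
    rw [Real.norm_eq_abs, abs_mul, abs_mul, abs_of_pos (stdPDF_pos θ), one_mul]
    calc |stdCDF ((τ - θ) / σ)| * |stdCDF ((τ - θ) / σ) - θ| * stdPDF θ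
        ≤ 1 * (2 + |θ|) * stdPDF θ := by
          gcongr <;> first
            | exact (stdPDF_pos θ).le
            | (rw [abs_of_nonneg hc0]; exact hc1)
            | exact hB
            | exact mul_nonneg (abs_nonneg _) (stdPDF_pos θ).le
            | exact mul_nonneg (mul_nonneg (abs_nonneg _) (by positivity)) (stdPDF_pos θ).le
            | positivity
      _ = (2 + |θ|) * stdPDF θ := by ring
  · intro x _
    have hc0 := stdCDF_nonneg ((x - θ) / σ)
    have hc1 := stdCDF_le_one ((x - θ) / σ)
    have key : (stdPDF ((x - θ) / σ) * (1 / σ) * (stdCDF ((x - θ) / σ) - θ) +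
          stdCDF ((x - θ) / σ) * (stdPDF ((x - θ) / σ) * (1 / σ))) * stdPDF θ
        = (stdPDF ((x - θ) / σ) * (1 / σ)) * ((2 * stdCDF ((x - θ) / σ) - θ) * stdPDF θ) := by
      ring
    rw [Real.norm_eq_abs]
    beta_reduce
    rw [key, abs_mul, abs_mul, abs_mul, abs_of_pos (stdPDF_pos θ)]
    have h2 : |stdPDF ((x - θ) / σ)| ≤ (Real.sqrt (2 * Real.pi))⁻¹ := abs_stdPDF_le _
    have h3 : |2 * stdCDF ((x - θ) / σ) - θ| ≤ 2 + |θ| := by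
      rw [abs_le]; constructor <;> nlinarith [le_abs_self θ, neg_abs_le θ]
    have h4 : |1 / σ| = 1 / σ := abs_of_pos (by positivity)
    rw [h4]
    calc |stdPDF ((x - θ) / σ)| * (1 / σ) * (|2 * stdCDF ((x - θ) / σ) - θ| * stdPDF θ)
        ≤ (Real.sqrt (2 * Real.pi))⁻¹ * (1 / σ) * ((2 + |θ|) * stdPDF θ) := by
          gcongr <;> first
            | exact (stdPDF_pos θ).le
            | exact h2
            | exact h3
            | exact mul_nonneg (abs_nonneg _) (stdPDF_pos θ).le
            | exact mul_nonneg (mul_nonneg (abs_nonneg _) (by positivity)) (stdPDF_pos θ).le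
            | positivity
      _ = 1 / σ * (Real.sqrt (2 * Real.pi))⁻¹ * ((2 + |θ|) * stdPDF θ) := by ring
  · have hc := hasDerivAt_c hσ θ x
    exact ((hc.mul (hc.sub_const θ)).mul_const (stdPDF θ))

/- ### Identification of the derivative -/

lemma deriv_value {σ : ℝ} (γ : ℝ) (hσ : 0 < σ) (τ : ℝ) :
    (∫ θ in Set.Iic (1 : ℝ),
        (stdPDF ((τ - θ) / σ) * (1 / σ) + γ * (0 - stdPDF ((τ - θ) / σ) * (1 / σ))) * (1 - θ) *
          stdPDF θ) +
      (∫ θ in Set.Ioi (1 : ℝ),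
        (stdPDF ((τ - θ) / σ) * (1 / σ) * (stdCDF ((τ - θ) / σ) - θ) +
          stdCDF ((τ - θ) / σ) * (stdPDF ((τ - θ) / σ) * (1 / σ))) * stdPDF θ)
    = fY σ τ * (Δ₂ σ γ τ + ∫ θ in Set.Ioi (1 : ℝ), stdCDF ((τ - θ) / σ) * postPDF σ τ θ) := by
  have e1 : (∫ θ in Set.Iic (1 : ℝ),
      (stdPDF ((τ - θ) / σ) * (1 / σ) + γ * (0 - stdPDF ((τ - θ) / σ) * (1 / σ))) * (1 - θ) *
        stdPDF θ)
      = fY σ τ * ∫ θ in Set.Iic (1 : ℝ), (1 - γ) * (1 - θ) * postPDF σ τ θ := by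
    rw [← integral_const_mul]
    refine integral_congr_ae (.of_forall fun θ => ?_)
    linear_combination ((1 - γ) * (1 - θ)) * density_identity hσ τ θ
  have split : (fun θ : ℝ =>
      (stdPDF ((τ - θ) / σ) * (1 / σ) * (stdCDF ((τ - θ) / σ) - θ) +
        stdCDF ((τ - θ) / σ) * (stdPDF ((τ - θ) / σ) * (1 / σ))) * stdPDF θ)
      = fun θ : ℝ =>
        (stdCDF ((τ - θ) / σ) - θ) * (stdPDF ((τ - θ) / σ) * (1 / σ) * stdPDF θ) +
        stdCDF ((τ - θ) / σ) * (stdPDF ((τ - θ) / σ) * (1 / σ) * stdPDF θ) := by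
    funext θ; ring
  have hiu : Integrable
      (fun θ : ℝ => (stdCDF ((τ - θ) / σ) - θ) * (stdPDF ((τ - θ) / σ) * (1 / σ) * stdPDF θ))
      (volume.restrict (Set.Ioi (1 : ℝ))) := by
    refine ((integrable_bound ((1 / σ) * (Real.sqrt (2 * Real.pi))⁻¹)).restrict).mono'
      ((((cont_c σ τ).sub continuous_id).mul
        (((cont_p σ τ).mul continuous_const).mul continuous_stdPDF)).aestronglyMeasurable.restrict)
      (.of_forall fun θ => ?_)
    have hc0 := stdCDF_nonneg ((τ - θ) / σ)
    have hc1 := stdCDF_le_one ((τ - θ) / σ)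
    have hB : |stdCDF ((τ - θ) / σ) - θ| ≤ 2 + |θ| := by
      rw [abs_le]; constructor <;> nlinarith [le_abs_self θ, neg_abs_le θ]
    rw [Real.norm_eq_abs, abs_mul, abs_mul, abs_mul, abs_of_pos (stdPDF_pos θ),
      abs_of_pos (by positivity : (0:ℝ) < 1 / σ)]
    calc |stdCDF ((τ - θ) / σ) - θ| * (|stdPDF ((τ - θ) / σ)| * (1 / σ) * stdPDF θ)
        ≤ (2 + |θ|) * ((Real.sqrt (2 * Real.pi))⁻¹ * (1 / σ) * stdPDF θ) := by
          gcongr <;> first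
            | exact (stdPDF_pos θ).le
            | exact hB
            | exact abs_stdPDF_le _
            | exact mul_nonneg (abs_nonneg _) (stdPDF_pos θ).le
            | exact mul_nonneg (mul_nonneg (abs_nonneg _) (by positivity)) (stdPDF_pos θ).le
            | positivity
      _ = 1 / σ * (Real.sqrt (2 * Real.pi))⁻¹ * ((2 + |θ|) * stdPDF θ) := by ring
  have hiv : Integrable
      (fun θ : ℝ => stdCDF ((τ - θ) / σ) * (stdPDF ((τ - θ) / σ) * (1 / σ) * stdPDF θ))
      (volume.restrict (Set.Ioi (1 : ℝ))) := by
    refine ((integrable_bound ((1 / σ) * (Real.sqrt (2 * Real.pi))⁻¹)).restrict).mono'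
      (((cont_c σ τ).mul
        (((cont_p σ τ).mul continuous_const).mul continuous_stdPDF)).aestronglyMeasurable.restrict)
      (.of_forall fun θ => ?_)
    have hc0 := stdCDF_nonneg ((τ - θ) / σ)
    have hc1 := stdCDF_le_one ((τ - θ) / σ)
    rw [Real.norm_eq_abs, abs_mul, abs_mul, abs_mul, abs_of_pos (stdPDF_pos θ),
      abs_of_pos (by positivity : (0:ℝ) < 1 / σ), abs_of_nonneg hc0]
    calc stdCDF ((τ - θ) / σ) * (|stdPDF ((τ - θ) / σ)| * (1 / σ) * stdPDF θ)
        ≤ (2 + |θ|) * ((Real.sqrt (2 * Real.pi))⁻¹ * (1 / σ) * stdPDF θ) := by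
          gcongr <;> first
            | exact (stdPDF_pos θ).le
            | exact hc1.trans (by linarith [abs_nonneg θ])
            | exact abs_stdPDF_le _
            | exact mul_nonneg (abs_nonneg _) (stdPDF_pos θ).le
            | exact mul_nonneg (mul_nonneg (abs_nonneg _) (by positivity)) (stdPDF_pos θ).le
            | positivity
      _ = 1 / σ * (Real.sqrt (2 * Real.pi))⁻¹ * ((2 + |θ|) * stdPDF θ) := by ring
  have e2 : (∫ θ in Set.Ioi (1 : ℝ),
      (stdPDF ((τ - θ) / σ) * (1 / σ) * (stdCDF ((τ - θ) / σ) - θ) +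
        stdCDF ((τ - θ) / σ) * (stdPDF ((τ - θ) / σ) * (1 / σ))) * stdPDF θ)
      = fY σ τ * (∫ θ in Set.Ioi (1 : ℝ), (stdCDF ((τ - θ) / σ) - θ) * postPDF σ τ θ) +
        fY σ τ * (∫ θ in Set.Ioi (1 : ℝ), stdCDF ((τ - θ) / σ) * postPDF σ τ θ) := by
    rw [split, integral_add hiu hiv]
    congr 1
    · rw [← integral_const_mul]
      refine integral_congr_ae (.of_forall fun θ => ?_)
      linear_combination (stdCDF ((τ - θ) / σ) - θ) * density_identity hσ τ θ
    · rw [← integral_const_mul]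
      refine integral_congr_ae (.of_forall fun θ => ?_)
      linear_combination (stdCDF ((τ - θ) / σ)) * density_identity hσ τ θ
  rw [e1, e2]
  unfold Δ₂
  ring

/- ### Main theorem -/

/-- dW₂/dτ = f_Y(τ)[Δ₂(τ,σ,γ) + ∫_1^∞ Φ((τ−θ)/σ) f(θ|Y=τ) dθ]; hence W₂ is strictly
increasing in τ on any interval where Δ₂ > 0. -/
theorem stmt14 (σ γ : ℝ) (hσ : 0 < σ) (hγ : γ ∈ Set.Ioo (0 : ℝ) 1) :
    (∀ τ : ℝ, HasDerivAt (fun t => W₂ σ γ t)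
      (fY σ τ * (Δ₂ σ γ τ + ∫ θ in Set.Ioi (1 : ℝ), stdCDF ((τ - θ) / σ) * postPDF σ τ θ)) τ) ∧
    (∀ a b : ℝ, a < b → (∀ τ ∈ Set.Icc a b, 0 < Δ₂ σ γ τ) → W₂ σ γ a < W₂ σ γ b) := by
  have hderiv : ∀ τ : ℝ, HasDerivAt (fun t => W₂ σ γ t)
      (fY σ τ * (Δ₂ σ γ τ + ∫ θ in Set.Ioi (1 : ℝ), stdCDF ((τ - θ) / σ) * postPDF σ τ θ)) τ := by
    intro τ
    have hW : (fun t => W₂ σ γ t) = fun x =>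
        (∫ θ in Set.Iic (1 : ℝ),
          (stdCDF ((x - θ) / σ) + γ * (1 - stdCDF ((x - θ) / σ))) * (1 - θ) * stdPDF θ) +
        ∫ θ in Set.Ioi (1 : ℝ),
          stdCDF ((x - θ) / σ) * (stdCDF ((x - θ) / σ) - θ) * stdPDF θ := by
      funext t; simp only [W₂, F1]
    rw [hW, ← deriv_value γ hσ τ]
    exact (deriv_part1 γ hσ hγ τ).add (deriv_part2 hσ τ)
  refine ⟨hderiv, fun a b hab hΔ => ?_⟩
  have hmono : StrictMonoOn (fun t => W₂ σ γ t) (Set.Icc a b) := by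
    refine strictMonoOn_of_deriv_pos (convex_Icc a b)
      (fun x _ => (hderiv x).differentiableAt.continuousAt.continuousWithinAt) fun x hx => ?_
    rw [interior_Icc] at hx
    rw [(hderiv x).deriv]
    have h1 : 0 < Δ₂ σ γ x := hΔ x ⟨hx.1.le, hx.2.le⟩
    have h2 : 0 ≤ ∫ θ in Set.Ioi (1 : ℝ), stdCDF ((x - θ) / σ) * postPDF σ x θ :=
      setIntegral_nonneg measurableSet_Ioi fun θ _ =>
        mul_nonneg (stdCDF_nonneg _) (postPDF_nonneg σ x θ)
    exact mul_pos (fY_pos hσ x) (by linarith)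
  exact hmono (Set.left_mem_Icc.2 hab.le) (Set.right_mem_Icc.2 hab.le) hab
end
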